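/- Let f(x) = c₁ + c₂x^{a₂} + c₃x^{a₃} with real coefficients, 0 < a₂ < a₃, c₃ > 0 > c₂, c₁ > 0, and suppose the discriminant condition Δ(f) := a₂^{a₂}(a₃−a₂)^{a₃−a₂}(−c₂)^{a₃} − a₃^{a₃} c₁^{a₃−a₂} c₃^{a₂} equals 0 and gcd(a₂, a₃) = 1. Then ζ := (−a₂c₂/(a₃c₃))^{1/(a₃−a₂)} is a positive root of f with f(ζ) = f'(ζ) = 0, and f has no other positive real root. -/

import Mathlib

theorem degenerate_trinomial_root (c₁ c₂ c₃ : ℝ) (a₂ a₃ : ℕ)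
    (h₂ : 0 < a₂) (h₂₃ : a₂ < a₃) (hgcd : Nat.gcd a₂ a₃ = 1)
    (hc₁ : 0 < c₁) (hc₂ : c₂ < 0) (hc₃ : 0 < c₃)
    (hΔ : (a₂ : ℝ) ^ a₂ * ((a₃ : ℝ) - (a₂ : ℝ)) ^ (a₃ - a₂) * (-c₂) ^ a₃ -
      (a₃ : ℝ) ^ a₃ * c₁ ^ (a₃ - a₂) * c₃ ^ a₂ = 0) :
    0 < (-(a₂ : ℝ) * c₂ / ((a₃ : ℝ) * c₃)) ^ ((1 : ℝ) / ((a₃ : ℝ) - (a₂ : ℝ))) ∧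
    (let ζ := (-(a₂ : ℝ) * c₂ / ((a₃ : ℝ) * c₃)) ^ ((1 : ℝ) / ((a₃ : ℝ) - (a₂ : ℝ)));
      c₁ + c₂ * ζ ^ a₂ + c₃ * ζ ^ a₃ = 0 ∧
      deriv (fun x : ℝ => c₁ + c₂ * x ^ a₂ + c₃ * x ^ a₃) ζ = 0 ∧
      ∀ x : ℝ, 0 < x → c₁ + c₂ * x ^ a₂ + c₃ * x ^ a₃ = 0 → x = ζ) := by
  set d : ℕ := a₃ - a₂ with hd_def
  have hdpos : 0 < d := Nat.sub_pos_of_lt h₂₃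
  have had : a₂ + d = a₃ := Nat.add_sub_cancel' h₂₃.le
  have hdcast : (a₃ : ℝ) - (a₂ : ℝ) = (d : ℝ) := by
    rw [hd_def, Nat.cast_sub h₂₃.le]
  have ha₂pos : (0 : ℝ) < a₂ := by exact_mod_cast h₂
  have ha₃pos : (0 : ℝ) < a₃ := by exact_mod_cast h₂.trans h₂₃
  have hdRpos : (0 : ℝ) < d := by exact_mod_cast hdpos
  set b : ℝ := -c₂ with hb_def
  have hb : 0 < b := neg_pos.mpr hc₂
  have hc₂b : c₂ = -b := by rw [hb_def, neg_neg]
  set r : ℝ := -(a₂ : ℝ) * c₂ / ((a₃ : ℝ) * c₃) with hr_def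
  have hr2 : r = (a₂ : ℝ) * b / ((a₃ : ℝ) * c₃) := by rw [hr_def, hc₂b]; ring_nf
  have hr : 0 < r := by rw [hr2]; positivity
  set ζ : ℝ := r ^ ((1 : ℝ) / ((a₃ : ℝ) - (a₂ : ℝ))) with hζ_def
  have hζpos : 0 < ζ := Real.rpow_pos_of_pos hr _
  have hζd : ζ ^ d = r := by
    rw [hζ_def, hdcast, ← Real.rpow_natCast (r ^ ((1:ℝ)/(d:ℝ))) d,
      ← Real.rpow_mul hr.le, one_div, inv_mul_cancel₀ (ne_of_gt hdRpos),
      Real.rpow_one]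
  have hΔ' : (a₂ : ℝ) ^ a₂ * (d : ℝ) ^ d * b ^ (a₂ + d) =
      (a₃ : ℝ) ^ (a₂ + d) * c₁ ^ d * c₃ ^ a₂ := by
    rw [had, hb_def]
    rw [hdcast] at hΔ
    linarith
  -- key equation: c₁ = ζ ^ a₂ * (b * d / a₃)
  have hkey : c₁ = ζ ^ a₂ * (b * (d : ℝ) / (a₃ : ℝ)) := by
    have hA : (ζ ^ a₂ * (b * (d : ℝ) / (a₃ : ℝ))) ^ d = c₁ ^ d := by
      have h1 : (ζ ^ a₂) ^ d = r ^ a₂ := by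
        rw [← pow_mul, mul_comm a₂ d, pow_mul, hζd]
      rw [mul_pow, h1, hr2, div_pow, div_pow, div_mul_div_comm,
        div_eq_iff (by positivity)]
      linear_combination hΔ'
    exact ((pow_left_inj₀ (by positivity) hc₁.le hdpos.ne').mp hA).symm
  refine ⟨hζpos, ?_, ?_, ?_⟩
  · -- f(ζ) = 0
    have h3 : ζ ^ a₃ = ζ ^ a₂ * r := by rw [← had, pow_add, hζd]
    rw [h3, hr2, hc₂b, hkey]
    field_simp
    linear_combination (ζ ^ a₂ * c₂) * hdcast
  · -- derivative vanishes
    have hder : HasDerivAt (fun x : ℝ => c₁ + c₂ * x ^ a₂ + c₃ * x ^ a₃)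
        (c₂ * ((a₂ : ℝ) * ζ ^ (a₂ - 1)) + c₃ * ((a₃ : ℝ) * ζ ^ (a₃ - 1))) ζ := by
      exact (((hasDerivAt_pow a₂ ζ).const_mul c₂).const_add c₁).add
        ((hasDerivAt_pow a₃ ζ).const_mul c₃)
    rw [hder.deriv]
    have h31 : ζ ^ (a₃ - 1) = ζ ^ (a₂ - 1) * r := by
      rw [← hζd, ← pow_add]
      congr 1
      omega
    rw [h31, hr2, hc₂b]
    field_simp
    ring
  · -- uniqueness
    intro x hx hfx
    have hder : ∀ y : ℝ, HasDerivAt (fun x : ℝ => c₁ + c₂ * x ^ a₂ + c₃ * x ^ a₃)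
        (c₂ * ((a₂ : ℝ) * y ^ (a₂ - 1)) + c₃ * ((a₃ : ℝ) * y ^ (a₃ - 1))) y := by
      intro y
      exact (((hasDerivAt_pow a₂ y).const_mul c₂).const_add c₁).add
        ((hasDerivAt_pow a₃ y).const_mul c₃)
    have hcont : Continuous (fun x : ℝ => c₁ + c₂ * x ^ a₂ + c₃ * x ^ a₃) := by
      fun_prop
    have hfζ : c₁ + c₂ * ζ ^ a₂ + c₃ * ζ ^ a₃ = 0 := by
      have h3 : ζ ^ a₃ = ζ ^ a₂ * r := by rw [← had, pow_add, hζd]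
      rw [h3, hr2, hc₂b, hkey]
      field_simp
      linear_combination (ζ ^ a₂ * c₂) * hdcast
    -- sign of the derivative away from ζ
    have hsign : ∀ y : ℝ, 0 < y →
        c₂ * ((a₂ : ℝ) * y ^ (a₂ - 1)) + c₃ * ((a₃ : ℝ) * y ^ (a₃ - 1)) =
        y ^ (a₂ - 1) * ((a₃ : ℝ) * c₃ * (y ^ d - r)) := by
      intro y hy
      have h31 : y ^ (a₃ - 1) = y ^ (a₂ - 1) * y ^ d := by
        rw [← pow_add]; congr 1; omega
      rw [h31, hr2, hc₂b]
      field_simp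
      ring
    have hanti : StrictAntiOn (fun x : ℝ => c₁ + c₂ * x ^ a₂ + c₃ * x ^ a₃)
        (Set.Icc 0 ζ) := by
      apply strictAntiOn_of_deriv_neg (convex_Icc 0 ζ) hcont.continuousOn
      intro y hy
      rw [interior_Icc] at hy
      rw [(hder y).deriv, hsign y hy.1]
      have hyd : y ^ d < r := by
        rw [← hζd]
        exact pow_lt_pow_left₀ hy.2 hy.1.le hdpos.ne'
      have : (a₃ : ℝ) * c₃ * (y ^ d - r) < 0 := by
        apply mul_neg_of_pos_of_neg (by positivity)
        linarith
      exact mul_neg_of_pos_of_neg (pow_pos hy.1 _) this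
    have hmono : StrictMonoOn (fun x : ℝ => c₁ + c₂ * x ^ a₂ + c₃ * x ^ a₃)
        (Set.Ici ζ) := by
      apply strictMonoOn_of_deriv_pos (convex_Ici ζ) hcont.continuousOn
      intro y hy
      rw [interior_Ici] at hy
      have hy0 : 0 < y := hζpos.trans hy
      rw [(hder y).deriv, hsign y hy0]
      have hyd : r < y ^ d := by
        rw [← hζd]
        exact pow_lt_pow_left₀ hy hζpos.le hdpos.ne'
      have : 0 < (a₃ : ℝ) * c₃ * (y ^ d - r) := by
        apply mul_pos (by positivity)
        linarith
      exact mul_pos (pow_pos hy0 _) this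
    rcases lt_trichotomy x ζ with h | h | h
    · exfalso
      have := hanti ⟨hx.le, h.le⟩ ⟨hζpos.le, le_refl ζ⟩ h
      simp only [hfx, hfζ] at this
      exact lt_irrefl 0 this
    · exact h
    · exfalso
      have := hmono (Set.self_mem_Ici) (Set.mem_Ici.mpr h.le) h
      simp only [hfx, hfζ] at this
      exact lt_irrefl 0 this
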